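/- Let P be a nonnegative n×m matrix without zero columns and with rank(P) > 1. For every ε > 0 there exists a nonnegative matrix N with ‖N − P‖_F < ε such that rk₊(N) = rk₊(P) and N is not a scalar multiple of P. -/

import Mathlib

open Matrix BigOperators Filter Topology

/-- The nonnegative rank: least `k` such that `P` is a sum of `k` nonnegative dyads. -/
noncomputable def nnRank {n m : ℕ} (P : Matrix (Fin n) (Fin m) ℝ) : ℕ :=
  sInf {k : ℕ | ∃ (c : Fin k → Fin n → ℝ) (r : Fin k → Fin m → ℝ),
    (∀ h i, 0 ≤ c h i) ∧ (∀ h j, 0 ≤ r h j) ∧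
    P = ∑ h, Matrix.vecMulVec (c h) (r h)}

/-- Frobenius distance between two matrices. -/
noncomputable def frobDist {n m : ℕ} (P N : Matrix (Fin n) (Fin m) ℝ) : ℝ :=
  Real.sqrt (∑ i, ∑ j, (P i j - N i j) ^ 2)

lemma nnRank_set_nonempty {n m : ℕ} (P : Matrix (Fin n) (Fin m) ℝ)
    (hP : ∀ i j, 0 ≤ P i j) :
    {k : ℕ | ∃ (c : Fin k → Fin n → ℝ) (r : Fin k → Fin m → ℝ),
      (∀ h i, 0 ≤ c h i) ∧ (∀ h j, 0 ≤ r h j) ∧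
      P = ∑ h, Matrix.vecMulVec (c h) (r h)}.Nonempty := by
  refine ⟨m, fun j i => P i j, fun j j' => if j = j' then 1 else 0, fun h i => hP i h,
    fun h j => by positivity, ?_⟩
  ext i j
  simp [Matrix.sum_apply, Matrix.vecMulVec_apply, mul_ite, mul_one, mul_zero]

lemma nnRank_mem {n m : ℕ} (P : Matrix (Fin n) (Fin m) ℝ) (hP : ∀ i j, 0 ≤ P i j) :
    ∃ (c : Fin (nnRank P) → Fin n → ℝ) (r : Fin (nnRank P) → Fin m → ℝ),
    (∀ h i, 0 ≤ c h i) ∧ (∀ h j, 0 ≤ r h j) ∧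
    P = ∑ h, Matrix.vecMulVec (c h) (r h) :=
  Nat.sInf_mem (nnRank_set_nonempty P hP)

lemma nnRank_scale_le {n m : ℕ} (P : Matrix (Fin n) (Fin m) ℝ)
    (hP : ∀ i j, 0 ≤ P i j) (d : Fin m → ℝ) (hd : ∀ j, 0 < d j) :
    nnRank (Matrix.of fun i j => P i j * d j) ≤ nnRank P := by
  obtain ⟨c, r, hc, hr, hPeq⟩ := nnRank_mem P hP
  apply Nat.sInf_le
  refine ⟨c, fun h j => r h j * d j, hc,
    fun h j => mul_nonneg (hr h j) (hd j).le, ?_⟩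
  ext i j
  have := congrFun (congrFun hPeq i) j
  simp only [Matrix.sum_apply, Matrix.vecMulVec_apply] at this ⊢
  simp only [Matrix.of_apply, this, Finset.sum_mul, mul_assoc]

theorem barycentric_perturbation {n m : ℕ} (P : Matrix (Fin n) (Fin m) ℝ)
    (hP : ∀ i j, 0 ≤ P i j) (hcol : ∀ j, ∃ i, P i j ≠ 0)
    (hrk : 1 < P.rank) :
    ∀ ε > (0 : ℝ), ∃ N : Matrix (Fin n) (Fin m) ℝ,
      (∀ i j, 0 ≤ N i j) ∧ frobDist N P < ε ∧
      nnRank N = nnRank P ∧ ∀ lam : ℝ, N ≠ lam • P := by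
  intro ε hε
  have hm : 2 ≤ m := by
    have := Matrix.rank_le_width P
    omega
  set T : ℝ := ∑ i, ∑ j, (P i j) ^ 2 with hT
  have hT0 : 0 ≤ T := Finset.sum_nonneg fun i _ => Finset.sum_nonneg fun j _ => sq_nonneg _
  set S : ℝ := Real.sqrt T with hS
  have hS0 : 0 ≤ S := Real.sqrt_nonneg _
  set δ : ℝ := ε / (S + 1) with hδdef
  have hδ : 0 < δ := div_pos hε (by linarith)
  set j0 : Fin m := ⟨0, by omega⟩
  set j1 : Fin m := ⟨1, by omega⟩
  set d : Fin m → ℝ := fun j => if j = j0 then 1 + δ else 1 with hd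
  have hdpos : ∀ j, 0 < d j := by
    intro j; simp only [hd]; split <;> linarith
  set N : Matrix (Fin n) (Fin m) ℝ := Matrix.of fun i j => P i j * d j with hN
  have hNnn : ∀ i j, 0 ≤ N i j := fun i j => mul_nonneg (hP i j) (hdpos j).le
  refine ⟨N, hNnn, ?_, ?_, ?_⟩
  · -- Frobenius distance
    have hsum : ∑ i, ∑ j, (N i j - P i j) ^ 2 ≤ δ ^ 2 * T := by
      rw [hT, Finset.mul_sum]
      refine Finset.sum_le_sum fun i _ => ?_
      rw [Finset.mul_sum]
      refine Finset.sum_le_sum fun j _ => ?_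
      simp only [hN, Matrix.of_apply, hd]
      split
      · ring_nf; nlinarith [sq_nonneg (P i j), sq_nonneg δ]
      · simp; positivity
    have : frobDist N P ≤ δ * S := by
      rw [frobDist]
      calc Real.sqrt (∑ i, ∑ j, (N i j - P i j) ^ 2) ≤ Real.sqrt (δ ^ 2 * T) :=
            Real.sqrt_le_sqrt hsum
        _ = δ * S := by
            rw [Real.sqrt_mul (sq_nonneg δ), Real.sqrt_sq hδ.le]
    have hlt : δ * S < ε := by
      rw [hδdef, div_mul_eq_mul_div, div_lt_iff₀ (by linarith : (0:ℝ) < S + 1)]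
      nlinarith
    linarith
  · -- nnRank equality
    apply le_antisymm
    · exact nnRank_scale_le P hP d hdpos
    · have h1 := nnRank_scale_le N hNnn (fun j => (d j)⁻¹) (fun j => inv_pos.2 (hdpos j))
      have heq : (Matrix.of fun i j => N i j * (d j)⁻¹) = P := by
        ext i j
        simp only [Matrix.of_apply, hN]
        field_simp
        exact mul_div_cancel_right₀ (P i j) (hdpos j).ne'
      rwa [heq] at h1
  · -- not a scalar multiple
    intro lam hlam
    obtain ⟨i1, hi1⟩ := hcol j1
    obtain ⟨i0, hi0⟩ := hcol j0
    have e1 : N i1 j1 = lam * P i1 j1 := by rw [hlam]; simp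
    have e0 : N i0 j0 = lam * P i0 j0 := by rw [hlam]; simp
    have hj10 : j1 ≠ j0 := by simp [j1, j0, Fin.ext_iff]
    have hd1 : d j1 = 1 := by simp [hd, hj10]
    have hd0 : d j0 = 1 + δ := by simp [hd]
    have hN1 : N i1 j1 = P i1 j1 := by simp [hN, hd1]
    have hN0 : N i0 j0 = (1 + δ) * P i0 j0 := by simp [hN, hd0]; ring
    have hlam1 : lam = 1 :=
      mul_right_cancel₀ hi1 (by rw [one_mul, ← e1, hN1])
    rw [hlam1, one_mul] at e0
    rw [hN0] at e0
    have : δ * P i0 j0 = 0 := by linarith [e0]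
    rcases mul_eq_zero.mp this with h | h
    · exact absurd h hδ.ne'
    · exact hi0 h
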